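/- arXiv:1907.10773 — 2 statements merged into one kernel-verified Lean document; each statement's English description precedes it below -/
import Mathlib

section
/- (Aliased WDD, noiseless) Let x, m ∈ ℂ^d, let K and L divide d, and let Y_{K,L} ∈ ℝ^{K×L} have entries (Y_{K,L})_{k,ℓ} = |Σ_{n=0}^{d-1} x_n m_{(n - ℓ d/L) mod d} e^{-2πin(kd/K)/d}|^2. Then for every α ∈ [L]_0 and ω ∈ [K]_0, (F_L Y_{K,L}^T F_K^T)_{α,ω} = (KL/d) Σ_{r=0}^{d/K-1} Σ_{ℓ=0}^{d/L-1} (F_d(x ∘ S_{ω-rK} conj(x)))_{α-ℓL} · (F_d(m ∘ S_{ω-rK} conj(m)))_{ℓL-α}, with all vector indices taken mod d. -/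
open Complex BigOperators Finset

/-- Discrete Fourier transform on `ℂ^d` (indexed by `ZMod d`). -/
noncomputable def dftV (d : ℕ) [NeZero d] (x : ZMod d → ℂ) : ZMod d → ℂ :=
  fun k => ∑ n : ZMod d, x n *
    Complex.exp (-2 * Real.pi * Complex.I * (n.val : ℂ) * (k.val : ℂ) / (d : ℂ))

/-- Circular shift: `(S_ℓ x)_n = x_{n+ℓ}`. -/
def shiftV {d : ℕ} (ℓ : ZMod d) (x : ZMod d → ℂ) : ZMod d → ℂ := fun n => x (n + ℓ)

/-- Reversal: `(R x)_n = x_{-n}`. -/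
def revV {d : ℕ} (x : ZMod d → ℂ) : ZMod d → ℂ := fun n => x (-n)

/-- Componentwise complex conjugation. -/
def conjV {d : ℕ} (x : ZMod d → ℂ) : ZMod d → ℂ := fun n => (starRingEnd ℂ) (x n)

/-- Hadamard (componentwise) product. -/
def hadV {d : ℕ} (x y : ZMod d → ℂ) : ZMod d → ℂ := fun n => x n * y n

/-- Circular convolution. -/
noncomputable def convV (d : ℕ) [NeZero d] (x y : ZMod d → ℂ) : ZMod d → ℂ :=
  fun ℓ => ∑ n : ZMod d, x n * y (ℓ - n)

/-- Modulation: `(W_ℓ x)_n = x_n e^{2πiℓn/d}`. -/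
noncomputable def modV {d : ℕ} (ℓ : ZMod d) (x : ZMod d → ℂ) : ZMod d → ℂ :=
  fun n => x n * Complex.exp (2 * Real.pi * Complex.I * (ℓ.val : ℂ) * (n.val : ℂ) / (d : ℂ))

/-- The `N × N` DFT matrix. -/
noncomputable def dftMat (N : ℕ) : Matrix (ZMod N) (ZMod N) ℂ :=
  fun j k => Complex.exp (-2 * Real.pi * Complex.I * (j.val : ℂ) * (k.val : ℂ) / (N : ℂ))


noncomputable def Ec (N : ℕ) (t : ℤ) : ℂ :=
  Complex.exp (-2 * Real.pi * Complex.I * (t : ℂ) / (N : ℂ))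

lemma Ec_add (N : ℕ) (s t : ℤ) : Ec N (s + t) = Ec N s * Ec N t := by
  unfold Ec
  rw [← Complex.exp_add]
  congr 1
  push_cast
  ring

lemma Ec_int_mul (N : ℕ) (hN : N ≠ 0) (q : ℤ) : Ec N (N * q) = 1 := by
  unfold Ec
  have hNc : (N : ℂ) ≠ 0 := Nat.cast_ne_zero.mpr hN
  have : -2 * (Real.pi : ℂ) * Complex.I * ((N * q : ℤ) : ℂ) / (N : ℂ) = (-q : ℤ) * (2 * Real.pi * Complex.I) := by
    push_cast
    field_simp
  rw [this, Complex.exp_int_mul_two_pi_mul_I]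

lemma Ec_congr (N : ℕ) (hN : N ≠ 0) {s t : ℤ} (h : (s : ZMod N) = (t : ZMod N)) :
    Ec N s = Ec N t := by
  have : ((s - t : ℤ) : ZMod N) = 0 := by push_cast [h]; ring
  rw [ZMod.intCast_zmod_eq_zero_iff_dvd] at this
  obtain ⟨q, hq⟩ := this
  have : s = t + N * q := by omega
  rw [this, Ec_add, Ec_int_mul N hN, mul_one]

lemma Ec_conj (N : ℕ) (t : ℤ) : (starRingEnd ℂ) (Ec N t) = Ec N (-t) := by
  unfold Ec
  rw [← Complex.exp_conj]
  congr 1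
  simp [map_div₀, map_mul, Complex.conj_I, map_ofNat, map_neg, map_intCast, map_natCast]

lemma Ec_scale (M P N : ℕ) (hN : N ≠ 0) (h : M * P = N) (t : ℤ) :
    Ec N (t * P) = Ec M t := by
  have hM : M ≠ 0 := by rintro rfl; simp at h; omega
  have hP : P ≠ 0 := by rintro rfl; simp at h; omega
  unfold Ec
  congr 1
  have hMc : (M : ℂ) ≠ 0 := Nat.cast_ne_zero.mpr hM
  have hPc : (P : ℂ) ≠ 0 := Nat.cast_ne_zero.mpr hP
  subst h
  push_cast
  field_simp

lemma Ec_pow (N : ℕ) (t : ℤ) (j : ℕ) : Ec N (t * j) = Ec N t ^ j := by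
  unfold Ec
  rw [← Complex.exp_nat_mul]
  congr 1
  push_cast
  ring

lemma Ec_eq_one_iff (N : ℕ) (hN : N ≠ 0) (t : ℤ) : Ec N t = 1 ↔ ((t : ZMod N) = 0) := by
  constructor
  · intro h
    unfold Ec at h
    rw [Complex.exp_eq_one_iff] at h
    obtain ⟨n, hn⟩ := h
    have hNc : (N : ℂ) ≠ 0 := Nat.cast_ne_zero.mpr hN
    have h2 : (2 : ℂ) * Real.pi * Complex.I ≠ 0 := by
      simp [Real.pi_ne_zero, Complex.I_ne_zero]
    have key : (2 : ℂ) * Real.pi * Complex.I * (t : ℂ) = 2 * Real.pi * Complex.I * ((-n * N : ℤ) : ℂ) := by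
      field_simp at hn
      push_cast
      linear_combination (-(2 * (Real.pi : ℂ) * Complex.I)) * hn
    have ht : (t : ℂ) = ((-n * N : ℤ) : ℂ) := mul_left_cancel₀ h2 key
    have ht' : t = -n * N := by exact_mod_cast ht
    rw [ZMod.intCast_zmod_eq_zero_iff_dvd]
    exact ⟨-n, by rw [ht']; ring⟩
  · intro h
    rw [ZMod.intCast_zmod_eq_zero_iff_dvd] at h
    obtain ⟨q, hq⟩ := h
    rw [hq, Ec_int_mul N hN]

lemma Ec_orth (M : ℕ) (hM : M ≠ 0) (t : ℤ) :
    ∑ j ∈ range M, Ec M (t * j) = if ((t : ZMod M) = 0) then (M : ℂ) else 0 := by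
  simp_rw [Ec_pow]
  by_cases h : (t : ZMod M) = 0
  · rw [if_pos h]
    have h1 : Ec M t = 1 := (Ec_eq_one_iff M hM t).mpr h
    simp [h1]
  · rw [if_neg h]
    have h1 : Ec M t ≠ 1 := fun hh => h ((Ec_eq_one_iff M hM t).mp hh)
    rw [geom_sum_eq h1]
    have hpow : Ec M t ^ M = 1 := by
      rw [← Ec_pow, show t * (M : ℕ) = (M : ℤ) * t by ring, Ec_int_mul M hM]
    rw [hpow]
    simp

lemma sum_range_zmod (L : ℕ) [NeZero L] (f : ℕ → ℂ) :
    ∑ j ∈ range L, f j = ∑ ℓ : ZMod L, f ℓ.val := by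
  refine Finset.sum_nbij' (fun j => (j : ZMod L)) (fun ℓ => ℓ.val) ?_ ?_ ?_ ?_ ?_
  · intro a _; exact Finset.mem_univ _
  · intro a _; exact Finset.mem_range.mpr (ZMod.val_lt a)
  · intro a ha; exact ZMod.val_cast_of_lt (Finset.mem_range.mp ha)
  · intro a _; simp [ZMod.natCast_val, ZMod.cast_id]
  · intro a ha; rw [ZMod.val_cast_of_lt (Finset.mem_range.mp ha)]

lemma cast_val_int (d M : ℕ) [NeZero d] (h : M ∣ d) (a : ZMod d) :
    (((a.val : ℤ) : ZMod M)) = ZMod.castHom h (ZMod M) a := by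
  rw [Int.cast_natCast, ZMod.natCast_val, ZMod.castHom_apply]

lemma sum_fiber (d M : ℕ) [NeZero d] (hM : M ≠ 0) (h : M ∣ d) (F : ZMod d → ℂ) (c : ZMod d) :
    ∑ p : ZMod d, (if (((c.val : ℤ) - (p.val : ℤ) : ℤ) : ZMod M) = 0 then F p else 0)
      = ∑ r ∈ range (d / M), F (c - ((r * M : ℕ) : ZMod d)) := by
  have hd : d ≠ 0 := NeZero.ne d
  have hdM : (d / M) * M = d := Nat.div_mul_cancel h
  -- condition rephrased
  have hcond : ∀ p : ZMod d, ((((c.val : ℤ) - (p.val : ℤ) : ℤ) : ZMod M) = 0) ↔ M ∣ (c - p).val := by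
    intro p
    have : (((c.val : ℤ) - (p.val : ℤ) : ℤ) : ZMod M)
        = ZMod.castHom h (ZMod M) c - ZMod.castHom h (ZMod M) p := by
      push_cast [cast_val_int d M h]
      rfl
    rw [this, sub_eq_zero, ← sub_eq_zero, ← map_sub]
    have h2 : ZMod.castHom h (ZMod M) (c - p) = (((c - p).val : ℕ) : ZMod M) := by
      rw [ZMod.castHom_apply, ← ZMod.natCast_val]
    rw [h2, ZMod.natCast_eq_zero_iff]
  have hvalcast : ∀ r : ℕ, r ∈ range (d / M) → (((r * M : ℕ) : ZMod d)).val = r * M := by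
    intro r hr
    apply ZMod.val_cast_of_lt
    have hrlt := Finset.mem_range.mp hr
    calc r * M < (d / M) * M := (Nat.mul_lt_mul_right (Nat.pos_of_ne_zero hM)).mpr hrlt
      _ = d := hdM
  calc ∑ p : ZMod d, (if (((c.val : ℤ) - (p.val : ℤ) : ℤ) : ZMod M) = 0 then F p else 0)
      = ∑ p : ZMod d, (if M ∣ (c - p).val then F p else 0) :=
        Finset.sum_congr rfl (fun p _ => by rw [if_congr (hcond p) rfl rfl])
    _ = ∑ p ∈ Finset.univ.filter (fun p : ZMod d => M ∣ (c - p).val), F p :=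
        (Finset.sum_filter _ _).symm
    _ = ∑ r ∈ range (d / M), F (c - ((r * M : ℕ) : ZMod d)) := by
        refine Finset.sum_nbij' (i := fun p => (c - p).val / M)
          (j := fun r => c - ((r * M : ℕ) : ZMod d)) ?_ ?_ ?_ ?_ ?_
        · intro p hp
          have hdvd := (Finset.mem_filter.mp hp).2
          have hlt : (c - p).val < d := ZMod.val_lt _
          obtain ⟨q, hq⟩ := hdvd
          simp only [Finset.mem_range]
          show (c - p).val / M < d / M
          rw [hq, Nat.mul_div_cancel_left _ (Nat.pos_of_ne_zero hM)]
          have h1 : q * M < (d / M) * M := by rw [mul_comm, ← hq, hdM]; exact hlt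
          exact (Nat.mul_lt_mul_right (Nat.pos_of_ne_zero hM)).mp h1
        · intro r hr
          rw [Finset.mem_filter]
          refine ⟨Finset.mem_univ _, ?_⟩
          rw [sub_sub_cancel, hvalcast r hr]
          exact ⟨r, by ring⟩
        · intro p hp
          have hdvd := (Finset.mem_filter.mp hp).2
          show c - (((c - p).val / M * M : ℕ) : ZMod d) = p
          rw [Nat.div_mul_cancel hdvd, ZMod.natCast_zmod_val, sub_sub_cancel]
        · intro r hr
          show (c - (c - ((r * M : ℕ) : ZMod d))).val / M = r
          rw [sub_sub_cancel, hvalcast r hr, Nat.mul_div_cancel _ (Nat.pos_of_ne_zero hM)]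
        · intro p hp
          have hdvd := (Finset.mem_filter.mp hp).2
          show F p = F (c - (((c - p).val / M * M : ℕ) : ZMod d))
          rw [Nat.div_mul_cancel hdvd, ZMod.natCast_zmod_val, sub_sub_cancel]

lemma exp_eq_Ec (N a b : ℕ) :
    Complex.exp (-2 * Real.pi * Complex.I * (a : ℂ) * (b : ℂ) / (N : ℂ)) = Ec N ((a : ℤ) * (b : ℤ)) := by
  unfold Ec
  congr 1
  push_cast
  ring

lemma phaseK (d K Δ : ℕ) (hd : d ≠ 0) (hKd : K * Δ = d) (a b w k : ℕ) :
    Ec d ((a : ℤ) * ((k * Δ : ℕ) : ℤ)) * Ec d (-((b : ℤ) * ((k * Δ : ℕ) : ℤ))) *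
      Ec K ((w : ℤ) * (k : ℤ)) = Ec K (((a : ℤ) - b + w) * k) := by
  have h1 : ((a : ℤ) * ((k * Δ : ℕ) : ℤ)) = ((a : ℤ) * k) * Δ := by push_cast; ring
  have h2 : (-((b : ℤ) * ((k * Δ : ℕ) : ℤ))) = (-((b : ℤ) * k)) * Δ := by push_cast; ring
  rw [h1, h2, Ec_scale K Δ d hd hKd, Ec_scale K Δ d hd hKd, ← Ec_add, ← Ec_add]
  congr 1
  ring

lemma phaseL (d Δ L : ℕ) (hd : d ≠ 0) (hLd : Δ * L = d) (a b α ℓ : ℤ) :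
    Ec d (a * (α - ℓ * L)) * Ec d (b * (ℓ * L - α))
      = Ec d ((a - b) * α) * Ec Δ ((b - a) * ℓ) := by
  rw [← Ec_scale Δ L d hd hLd ((b - a) * ℓ), ← Ec_add, ← Ec_add]
  congr 1
  ring

noncomputable def Mid (d K L : ℕ) [NeZero d] [NeZero K] [NeZero L]
    (x m : ZMod d → ℂ) (α : ZMod L) (ω : ZMod K) : ℂ :=
  (K : ℂ) * ∑ r ∈ Finset.range (d / K), ∑ ℓ : ZMod L, ∑ n : ZMod d,
    x n * (starRingEnd ℂ) (x (n + (((ω.val : ℤ) - (r : ℤ) * (K : ℤ) : ℤ) : ZMod d))) *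
    m (n - ((ℓ.val * (d / L) : ℕ) : ZMod d)) *
    (starRingEnd ℂ) (m (n + (((ω.val : ℤ) - (r : ℤ) * (K : ℤ) : ℤ) : ZMod d)
       - ((ℓ.val * (d / L) : ℕ) : ZMod d))) *
    Ec L ((α.val : ℤ) * (ℓ.val : ℤ))

section work
variable (d K L : ℕ) [NeZero d] [NeZero K] [NeZero L]

lemma lhs_step1 (hK : K ∣ d) (x m : ZMod d → ℂ)
    (Y : Matrix (ZMod K) (ZMod L) ℂ)
    (hY : ∀ (k : ZMod K) (ℓ : ZMod L), Y k ℓ =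
      ((‖(∑ n : ZMod d, x n * m (n - ((ℓ.val * (d / L) : ℕ) : ZMod d)) *
        Complex.exp (-2 * Real.pi * Complex.I * (n.val : ℂ) *
          ((k.val * (d / K) : ℕ) : ℂ) / (d : ℂ)))‖) ^ 2 : ℂ))
    (α : ZMod L) (ω : ZMod K) :
    (dftMat L * Y.transpose * (dftMat K).transpose) α ω
      = ∑ k : ZMod K, ∑ ℓ : ZMod L, ∑ n : ZMod d, ∑ n' : ZMod d,
          (x n * (starRingEnd ℂ) (x n') * m (n - ((ℓ.val * (d / L) : ℕ) : ZMod d)) *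
            (starRingEnd ℂ) (m (n' - ((ℓ.val * (d / L) : ℕ) : ZMod d))) *
            Ec L ((α.val : ℤ) * (ℓ.val : ℤ))) *
            Ec K (((n.val : ℤ) - (n'.val : ℤ) + (ω.val : ℤ)) * (k.val : ℤ)) := by
  have hd : d ≠ 0 := NeZero.ne d
  have hKd : K * (d / K) = d := Nat.mul_div_cancel' hK
  simp only [Matrix.mul_apply, Matrix.transpose_apply]
  have habs : ∀ z : ℂ, ((‖z‖ : ℂ)) ^ 2 = z * (starRingEnd ℂ) z := by
    intro z
    have : ((‖z‖ : ℂ)) ^ 2 = ((‖z‖ ^ 2 : ℝ) : ℂ) := by norm_cast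
    rw [this, Complex.sq_norm, Complex.mul_conj]
  simp_rw [hY, habs, map_sum, map_mul, exp_eq_Ec, Ec_conj, Finset.sum_mul, Finset.mul_sum,
    Finset.sum_mul]
  refine Finset.sum_congr rfl fun k _ => Finset.sum_congr rfl fun ℓ _ =>
    Finset.sum_congr rfl fun n _ => Finset.sum_congr rfl fun n' _ => ?_
  simp only [dftMat]
  rw [exp_eq_Ec L α.val ℓ.val, exp_eq_Ec K ω.val k.val]
  linear_combination (x n * (starRingEnd ℂ) (x n') * m (n - ((ℓ.val * (d / L) : ℕ) : ZMod d)) *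
    (starRingEnd ℂ) (m (n' - ((ℓ.val * (d / L) : ℕ) : ZMod d))) * Ec L ((α.val : ℤ) * (ℓ.val : ℤ))) *
    phaseK d K (d / K) hd hKd n.val n'.val ω.val k.val

lemma lhs_step2 (hK : K ∣ d) (x m : ZMod d → ℂ) (α : ZMod L) (ω : ZMod K) :
    (∑ k : ZMod K, ∑ ℓ : ZMod L, ∑ n : ZMod d, ∑ n' : ZMod d,
          (x n * (starRingEnd ℂ) (x n') * m (n - ((ℓ.val * (d / L) : ℕ) : ZMod d)) *
            (starRingEnd ℂ) (m (n' - ((ℓ.val * (d / L) : ℕ) : ZMod d))) *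
            Ec L ((α.val : ℤ) * (ℓ.val : ℤ))) *
            Ec K (((n.val : ℤ) - (n'.val : ℤ) + (ω.val : ℤ)) * (k.val : ℤ)))
      = Mid d K L x m α ω := by
  have hd : d ≠ 0 := NeZero.ne d
  have hKne : K ≠ 0 := NeZero.ne K
  have horth : ∀ t : ℤ, (∑ k : ZMod K, Ec K (t * (k.val : ℤ)))
      = if ((t : ZMod K) = 0) then (K : ℂ) else 0 := by
    intro t
    rw [← sum_range_zmod K (fun j => Ec K (t * (j : ℤ))), Ec_orth K hKne t]
  have hcondeq : ∀ n n' : ZMod d,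
      (((((n + ((ω.val : ℕ) : ZMod d)).val : ℤ) - (n'.val : ℤ) : ℤ) : ZMod K))
        = ((((n.val : ℤ) - (n'.val : ℤ) + (ω.val : ℤ) : ℤ) : ZMod K)) := by
    intro n n'
    push_cast [cast_val_int d K hK]
    rw [map_add, map_natCast]
    push_cast
    ring
  have hσ : ∀ (n : ZMod d) (r : ℕ),
      n + ((ω.val : ℕ) : ZMod d) - ((r * K : ℕ) : ZMod d)
        = n + (((ω.val : ℤ) - (r : ℤ) * (K : ℤ) : ℤ) : ZMod d) := by
    intro n r
    push_cast
    ring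
  -- move k innermost
  rw [Finset.sum_comm]
  trans (∑ ℓ : ZMod L, ∑ n : ZMod d, ∑ n' : ZMod d, ∑ k : ZMod K,
      (x n * (starRingEnd ℂ) (x n') * m (n - ((ℓ.val * (d / L) : ℕ) : ZMod d)) *
        (starRingEnd ℂ) (m (n' - ((ℓ.val * (d / L) : ℕ) : ZMod d))) *
        Ec L ((α.val : ℤ) * (ℓ.val : ℤ))) *
        Ec K (((n.val : ℤ) - (n'.val : ℤ) + (ω.val : ℤ)) * (k.val : ℤ)))
  · exact Finset.sum_congr rfl fun ℓ _ => by
      rw [Finset.sum_comm]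
      exact Finset.sum_congr rfl fun n _ => Finset.sum_comm
  simp_rw [← Finset.mul_sum, horth, mul_ite, mul_zero]
  trans (∑ ℓ : ZMod L, ∑ n : ZMod d, ∑ r ∈ Finset.range (d / K),
      (x n * (starRingEnd ℂ) (x (n + (((ω.val : ℤ) - (r : ℤ) * (K : ℤ) : ℤ) : ZMod d))) *
        m (n - ((ℓ.val * (d / L) : ℕ) : ZMod d)) *
        (starRingEnd ℂ) (m (n + (((ω.val : ℤ) - (r : ℤ) * (K : ℤ) : ℤ) : ZMod d)
          - ((ℓ.val * (d / L) : ℕ) : ZMod d))) *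
        Ec L ((α.val : ℤ) * (ℓ.val : ℤ))) * (K : ℂ))
  · refine Finset.sum_congr rfl fun ℓ _ => Finset.sum_congr rfl fun n _ => ?_
    simp_rw [← hcondeq n]
    rw [sum_fiber d K hKne hK
      (fun p => (x n * (starRingEnd ℂ) (x p) * m (n - ((ℓ.val * (d / L) : ℕ) : ZMod d)) *
        (starRingEnd ℂ) (m (p - ((ℓ.val * (d / L) : ℕ) : ZMod d))) *
        Ec L ((α.val : ℤ) * (ℓ.val : ℤ))) * (K : ℂ)) (n + ((ω.val : ℕ) : ZMod d))]
    simp_rw [hσ]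
  rw [Mid, Finset.mul_sum]
  simp_rw [Finset.mul_sum]
  refine Eq.trans (Finset.sum_congr rfl fun ℓ _ => Finset.sum_comm) ?_
  rw [Finset.sum_comm]
  exact Finset.sum_congr rfl fun r _ => Finset.sum_congr rfl fun ℓ _ =>
    Finset.sum_congr rfl fun n _ => by ring

lemma rhs_term (hL : L ∣ d) (x m : ZMod d → ℂ) (α : ZMod L) (ω : ZMod K) (r ℓ : ℕ) :
    dftV d (hadV x (shiftV (((ω.val : ℤ) - (r : ℤ) * (K : ℤ) : ℤ) : ZMod d) (conjV x)))
        (((α.val : ℤ) - (ℓ : ℤ) * (L : ℤ) : ℤ) : ZMod d) *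
      dftV d (hadV m (shiftV (((ω.val : ℤ) - (r : ℤ) * (K : ℤ) : ℤ) : ZMod d) (conjV m)))
        (((ℓ : ℤ) * (L : ℤ) - (α.val : ℤ) : ℤ) : ZMod d)
      = ∑ n : ZMod d, ∑ p : ZMod d,
          (x n * (starRingEnd ℂ) (x (n + (((ω.val : ℤ) - (r : ℤ) * (K : ℤ) : ℤ) : ZMod d))) *
            (m p * (starRingEnd ℂ) (m (p + (((ω.val : ℤ) - (r : ℤ) * (K : ℤ) : ℤ) : ZMod d))))) *
          (Ec d (((n.val : ℤ) - (p.val : ℤ)) * (α.val : ℤ)) *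
            Ec (d / L) (((p.val : ℤ) - (n.val : ℤ)) * (ℓ : ℤ))) := by
  have hd : d ≠ 0 := NeZero.ne d
  have hLd : (d / L) * L = d := Nat.div_mul_cancel hL
  have hvald : ∀ a : ZMod d, ((a.val : ℤ) : ZMod d) = a := fun a => by
    rw [Int.cast_natCast, ZMod.natCast_zmod_val]
  have hj1 : ∀ n : ZMod d, Ec d ((n.val : ℤ) * (((((α.val : ℤ) - (ℓ : ℤ) * (L : ℤ) : ℤ) : ZMod d)).val : ℤ))
      = Ec d ((n.val : ℤ) * ((α.val : ℤ) - (ℓ : ℤ) * (L : ℤ))) := by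
    intro n
    apply Ec_congr d hd
    push_cast [hvald]
    ring
  have hj2 : ∀ p : ZMod d, Ec d ((p.val : ℤ) * (((((ℓ : ℤ) * (L : ℤ) - (α.val : ℤ) : ℤ) : ZMod d)).val : ℤ))
      = Ec d ((p.val : ℤ) * ((ℓ : ℤ) * (L : ℤ) - (α.val : ℤ))) := by
    intro p
    apply Ec_congr d hd
    push_cast [hvald]
    ring
  simp only [dftV, hadV, shiftV, conjV]
  simp_rw [exp_eq_Ec, hj1, hj2, Finset.sum_mul_sum]
  refine Finset.sum_congr rfl fun n _ => Finset.sum_congr rfl fun p _ => ?_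
  linear_combination (x n * (starRingEnd ℂ) (x (n + (((ω.val : ℤ) - (r : ℤ) * (K : ℤ) : ℤ) : ZMod d))) *
    (m p * (starRingEnd ℂ) (m (p + (((ω.val : ℤ) - (r : ℤ) * (K : ℤ) : ℤ) : ZMod d))))) *
    phaseL d (d / L) L hd hLd (n.val : ℤ) (p.val : ℤ) (α.val : ℤ) (ℓ : ℤ)

lemma rhs_step (hL : L ∣ d) (x m : ZMod d → ℂ) (α : ZMod L) (ω : ZMod K) :
    ((K : ℂ) * (L : ℂ) / (d : ℂ)) *
      ∑ r ∈ Finset.range (d / K), ∑ ℓ ∈ Finset.range (d / L),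
        (∑ n : ZMod d, ∑ p : ZMod d,
          (x n * (starRingEnd ℂ) (x (n + (((ω.val : ℤ) - (r : ℤ) * (K : ℤ) : ℤ) : ZMod d))) *
            (m p * (starRingEnd ℂ) (m (p + (((ω.val : ℤ) - (r : ℤ) * (K : ℤ) : ℤ) : ZMod d))))) *
          (Ec d (((n.val : ℤ) - (p.val : ℤ)) * (α.val : ℤ)) *
            Ec (d / L) (((p.val : ℤ) - (n.val : ℤ)) * (ℓ : ℤ))))
      = Mid d K L x m α ω := by
  have hd : d ≠ 0 := NeZero.ne d
  have hLd : (d / L) * L = d := Nat.div_mul_cancel hL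
  have hLd' : L * (d / L) = d := Nat.mul_div_cancel' hL
  have hΔne : d / L ≠ 0 := by
    intro h0
    rw [h0, zero_mul] at hLd
    exact hd hLd.symm
  have hΔdvd : (d / L) ∣ d := ⟨L, hLd.symm⟩
  have hvald : ∀ a : ZMod d, ((a.val : ℤ) : ZMod d) = a := fun a => by
    rw [Int.cast_natCast, ZMod.natCast_zmod_val]
  have hflip : ∀ n p : ZMod d,
      (((((p.val : ℤ) - (n.val : ℤ) : ℤ) : ZMod (d / L)) = 0))
        = (((((n.val : ℤ) - (p.val : ℤ) : ℤ) : ZMod (d / L)) = 0)) := by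
    intro n p
    rw [show ((((p.val : ℤ) - (n.val : ℤ) : ℤ) : ZMod (d / L)))
        = -((((n.val : ℤ) - (p.val : ℤ) : ℤ) : ZMod (d / L))) from by push_cast; ring,
      neg_eq_zero]
  have hph : ∀ (n : ZMod d) (j : ℕ),
      Ec d (((n.val : ℤ) - (((n - ((j * (d / L) : ℕ) : ZMod d)).val : ℤ))) * (α.val : ℤ))
        = Ec L ((α.val : ℤ) * (j : ℤ)) := by
    intro n j
    obtain ⟨Δ, hΔ⟩ : ∃ Δ', d / L = Δ' := ⟨_, rfl⟩
    have hLΔ : L * Δ = d := by rw [← hΔ]; exact hLd'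
    rw [hΔ, ← Ec_scale L Δ d hd hLΔ ((α.val : ℤ) * (j : ℤ))]
    apply Ec_congr d hd
    push_cast [hvald]
    ring
  have harg : ∀ (a b c : ZMod d), a - b + c = a + c - b := fun a b c => by ring
  have hLc : (L : ℂ) * ((d / L : ℕ) : ℂ) = (d : ℂ) := by exact_mod_cast congrArg (Nat.cast : ℕ → ℂ) hLd'
  have hconst : (K : ℂ) * (L : ℂ) / (d : ℂ) * ((d / L : ℕ) : ℂ) = (K : ℂ) := by
    field_simp
    rw [mul_assoc, hLc]
  trans ((K : ℂ) * (L : ℂ) / (d : ℂ)) *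
      ∑ r ∈ Finset.range (d / K), ∑ n : ZMod d, ∑ p : ZMod d,
        ((x n * (starRingEnd ℂ) (x (n + (((ω.val : ℤ) - (r : ℤ) * (K : ℤ) : ℤ) : ZMod d))) *
            (m p * (starRingEnd ℂ) (m (p + (((ω.val : ℤ) - (r : ℤ) * (K : ℤ) : ℤ) : ZMod d))))) *
          Ec d (((n.val : ℤ) - (p.val : ℤ)) * (α.val : ℤ))) *
          (if ((((n.val : ℤ) - (p.val : ℤ) : ℤ) : ZMod (d / L)) = 0) then ((d / L : ℕ) : ℂ) else 0)
  · congr 1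
    refine Finset.sum_congr rfl fun r _ => ?_
    refine Eq.trans Finset.sum_comm ?_
    refine Eq.trans (Finset.sum_congr rfl fun n _ => Finset.sum_comm) ?_
    refine Finset.sum_congr rfl fun n _ => Finset.sum_congr rfl fun p _ => ?_
    calc ∑ ℓ ∈ Finset.range (d / L),
          (x n * (starRingEnd ℂ) (x (n + (((ω.val : ℤ) - (r : ℤ) * (K : ℤ) : ℤ) : ZMod d))) *
            (m p * (starRingEnd ℂ) (m (p + (((ω.val : ℤ) - (r : ℤ) * (K : ℤ) : ℤ) : ZMod d))))) *
          (Ec d (((n.val : ℤ) - (p.val : ℤ)) * (α.val : ℤ)) *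
            Ec (d / L) (((p.val : ℤ) - (n.val : ℤ)) * (ℓ : ℤ)))
        = ((x n * (starRingEnd ℂ) (x (n + (((ω.val : ℤ) - (r : ℤ) * (K : ℤ) : ℤ) : ZMod d))) *
            (m p * (starRingEnd ℂ) (m (p + (((ω.val : ℤ) - (r : ℤ) * (K : ℤ) : ℤ) : ZMod d))))) *
          Ec d (((n.val : ℤ) - (p.val : ℤ)) * (α.val : ℤ))) *
          ∑ ℓ ∈ Finset.range (d / L), Ec (d / L) (((p.val : ℤ) - (n.val : ℤ)) * (ℓ : ℤ)) := by
          rw [Finset.mul_sum]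
          exact Finset.sum_congr rfl fun _ _ => by ring
      _ = _ := by rw [Ec_orth (d / L) hΔne]; simp only [hflip]
  simp_rw [mul_ite, mul_zero]
  trans ((K : ℂ) * (L : ℂ) / (d : ℂ)) *
      ∑ r ∈ Finset.range (d / K), ∑ n : ZMod d, ∑ j ∈ Finset.range L,
        ((x n * (starRingEnd ℂ) (x (n + (((ω.val : ℤ) - (r : ℤ) * (K : ℤ) : ℤ) : ZMod d))) *
            (m (n - ((j * (d / L) : ℕ) : ZMod d)) *
              (starRingEnd ℂ) (m (n - ((j * (d / L) : ℕ) : ZMod d) + (((ω.val : ℤ) - (r : ℤ) * (K : ℤ) : ℤ) : ZMod d))))) *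
          Ec d (((n.val : ℤ) - (((n - ((j * (d / L) : ℕ) : ZMod d)).val : ℤ))) * (α.val : ℤ))) *
          ((d / L : ℕ) : ℂ)
  · congr 1
    refine Finset.sum_congr rfl fun r _ => Finset.sum_congr rfl fun n _ => ?_
    rw [sum_fiber d (d / L) hΔne hΔdvd
      (fun p => ((x n * (starRingEnd ℂ) (x (n + (((ω.val : ℤ) - (r : ℤ) * (K : ℤ) : ℤ) : ZMod d))) *
            (m p * (starRingEnd ℂ) (m (p + (((ω.val : ℤ) - (r : ℤ) * (K : ℤ) : ℤ) : ZMod d))))) *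
          Ec d (((n.val : ℤ) - (p.val : ℤ)) * (α.val : ℤ))) * ((d / L : ℕ) : ℂ)) n,
      Nat.div_div_self hL hd]
  simp_rw [hph, harg]
  rw [Mid, Finset.mul_sum]
  simp_rw [Finset.mul_sum, sum_range_zmod L]
  refine Finset.sum_congr rfl fun r _ => ?_
  refine Eq.trans Finset.sum_comm ?_
  refine Finset.sum_congr rfl fun ℓ _ => Finset.sum_congr rfl fun n _ => ?_
  trans ((K : ℂ) * (L : ℂ) / (d : ℂ) * ((d / L : ℕ) : ℂ)) *
    (x n * (starRingEnd ℂ) (x (n + (((ω.val : ℤ) - (r : ℤ) * (K : ℤ) : ℤ) : ZMod d))) *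
      (m (n - ((ℓ.val * (d / L) : ℕ) : ZMod d)) *
        (starRingEnd ℂ) (m (n + (((ω.val : ℤ) - (r : ℤ) * (K : ℤ) : ℤ) : ZMod d) - ((ℓ.val * (d / L) : ℕ) : ZMod d)))) *
      Ec L ((α.val : ℤ) * (ℓ.val : ℤ)))
  · ring
  rw [hconst]
  ring

end work

/-- aliased Wigner distribution deconvolution, noiseless. -/
theorem wdd_aliased (d K L : ℕ) [NeZero d] [NeZero K] [NeZero L]
    (hK : K ∣ d) (hL : L ∣ d) (x m : ZMod d → ℂ)
    (Y : Matrix (ZMod K) (ZMod L) ℂ)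
    (hY : ∀ (k : ZMod K) (ℓ : ZMod L), Y k ℓ =
      ((‖(∑ n : ZMod d, x n * m (n - ((ℓ.val * (d / L) : ℕ) : ZMod d)) *
        Complex.exp (-2 * Real.pi * Complex.I * (n.val : ℂ) *
          ((k.val * (d / K) : ℕ) : ℂ) / (d : ℂ)))‖) ^ 2 : ℂ)) :
    ∀ (α : ZMod L) (ω : ZMod K),
      (dftMat L * Y.transpose * (dftMat K).transpose) α ω =
        ((K : ℂ) * (L : ℂ) / (d : ℂ)) *
          ∑ r ∈ Finset.range (d / K), ∑ ℓ ∈ Finset.range (d / L),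
            dftV d (hadV x (shiftV (((ω.val : ℤ) - (r : ℤ) * (K : ℤ) : ℤ) : ZMod d) (conjV x)))
                (((α.val : ℤ) - (ℓ : ℤ) * (L : ℤ) : ℤ) : ZMod d) *
            dftV d (hadV m (shiftV (((ω.val : ℤ) - (r : ℤ) * (K : ℤ) : ℤ) : ZMod d) (conjV m)))
                (((ℓ : ℤ) * (L : ℤ) - (α.val : ℤ) : ℤ) : ZMod d) := by
  intro α ω
  have h1 := lhs_step1 d K L hK x m Y hY α ω
  have h2 := lhs_step2 d K L hK x m α ω
  have h3 : ((K : ℂ) * (L : ℂ) / (d : ℂ)) *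
          ∑ r ∈ Finset.range (d / K), ∑ ℓ ∈ Finset.range (d / L),
            dftV d (hadV x (shiftV (((ω.val : ℤ) - (r : ℤ) * (K : ℤ) : ℤ) : ZMod d) (conjV x)))
                (((α.val : ℤ) - (ℓ : ℤ) * (L : ℤ) : ℤ) : ZMod d) *
            dftV d (hadV m (shiftV (((ω.val : ℤ) - (r : ℤ) * (K : ℤ) : ℤ) : ZMod d) (conjV m)))
                (((ℓ : ℤ) * (L : ℤ) - (α.val : ℤ) : ℤ) : ZMod d)
      = Mid d K L x m α ω := by
    refine Eq.trans ?_ (rhs_step d K L hL x m α ω)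
    congr 1
    exact Finset.sum_congr rfl fun r _ => Finset.sum_congr rfl fun ℓ _ =>
      rhs_term d K L hL x m α ω r ℓ
  exact h1.trans (h2.trans h3.symm)
end

section
/- (Sum collapse for bandlimited masks, noiseless case) Let x, m ∈ ℂ^d with supp(F_d m) ⊆ [ρ]_0 (i.e., (F_d m)_k = 0 for k ≥ ρ), let 2 ≤ κ ≤ ρ, assume L = ρ + κ - 1 divides d, and let Y ∈ ℝ^{d×L} have entries Y_{ω,ℓ} = |Σ_{n=0}^{d-1} x_n m_{(n - ℓd/L) mod d} e^{-2πinω/d}|^2. Then for all ω ∈ [d]_0 and all α with 0 ≤ α ≤ κ-1, (F_L Y^T F_d^T)_{α,ω} = (L/d^2)(F_d((F_d x) ∘ S_{-α} conj(F_d x)))_ω · (F_d((F_d m) ∘ S_α conj(F_d m)))_ω; and for all α with ρ ≤ α ≤ L-1, (F_L Y^T F_d^T)_{α,ω} = (L/d^2)(F_d((F_d x) ∘ S_{L-α} conj(F_d x)))_ω · (F_d((F_d m) ∘ S_{α-L} conj(F_d m)))_ω. -/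
open Complex BigOperators Finset

noncomputable def zetaN (N : ℕ) : ℂ := Complex.exp (2 * Real.pi * Complex.I / N)
noncomputable def ee (N : ℕ) (t : ℤ) : ℂ := zetaN N ^ t

lemma zetaN_ne_zero (N : ℕ) : zetaN N ≠ 0 := Complex.exp_ne_zero _

lemma zetaN_prim (N : ℕ) [NeZero N] : IsPrimitiveRoot (zetaN N) N := by
  simpa [zetaN] using Complex.isPrimitiveRoot_exp N (NeZero.ne N)

lemma ee_def (N : ℕ) (t : ℤ) : ee N t = Complex.exp (2 * Real.pi * Complex.I * t / N) := by
  rw [ee, zetaN, ← Complex.exp_int_mul]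
  congr 1
  ring

lemma ee_add (N : ℕ) (a b : ℤ) : ee N (a + b) = ee N a * ee N b :=
  zpow_add₀ (zetaN_ne_zero N) a b

lemma ee_eq_one_iff (N : ℕ) [NeZero N] (t : ℤ) : ee N t = 1 ↔ (N : ℤ) ∣ t :=
  (zetaN_prim N).zpow_eq_one_iff_dvd t

lemma ee_congr (N : ℕ) [NeZero N] {a b : ℤ} (h : (N : ℤ) ∣ a - b) : ee N a = ee N b := by
  have : ee N (b + (a - b)) = ee N b * ee N (a - b) := ee_add N b (a - b)
  rw [(ee_eq_one_iff N _).2 h, mul_one] at this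
  simpa using this

lemma conj_ee (N : ℕ) (t : ℤ) : (starRingEnd ℂ) (ee N t) = ee N (-t) := by
  rw [ee_def, ee_def, ← Complex.exp_conj]
  congr 1
  simp only [map_div₀, map_mul, map_neg, Complex.conj_I, Complex.conj_ofReal, map_ofNat,
    Complex.conj_natCast, map_intCast]
  push_cast
  ring

lemma exp_eq_ee (N : ℕ) (a b : ℕ) :
    Complex.exp (-2 * Real.pi * Complex.I * (a : ℂ) * (b : ℂ) / (N : ℂ)) = ee N (-(a * b)) := by
  rw [ee_def]
  congr 1
  push_cast
  ring

lemma dftV_ee (d : ℕ) [NeZero d] (x : ZMod d → ℂ) (k : ZMod d) :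
    dftV d x k = ∑ n : ZMod d, x n * ee d (-(n.val * k.val)) := by
  unfold dftV
  refine Finset.sum_congr rfl fun n _ => ?_
  rw [exp_eq_ee]

lemma sum_zmod_val {M : Type*} [AddCommMonoid M] (N : ℕ) [NeZero N] (f : ℕ → M) :
    ∑ j : ZMod N, f j.val = ∑ i ∈ Finset.range N, f i := by
  rw [← Fin.sum_univ_eq_sum_range]
  exact Fintype.sum_bijective (fun j : ZMod N => (⟨j.val, ZMod.val_lt j⟩ : Fin N))
    ⟨fun a b h => ZMod.val_injective N (by simpa using congrArg Fin.val h),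
     fun i => ⟨(i.1 : ZMod N), by ext; simp [ZMod.val_cast_of_lt i.2]⟩⟩
    _ _ (fun j => rfl)

lemma sum_ee (N : ℕ) [NeZero N] (t : ℤ) :
    (∑ j : ZMod N, ee N (t * j.val)) = if (N : ℤ) ∣ t then (N : ℂ) else 0 := by
  have h1 : ∀ j : ZMod N, ee N (t * j.val) = (ee N t) ^ j.val := by
    intro j
    rw [ee, ee, ← zpow_natCast _ j.val, ← zpow_mul]
  simp_rw [h1]
  rw [sum_zmod_val N (fun i => ee N t ^ i)]
  by_cases h : (N : ℤ) ∣ t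
  · rw [if_pos h, (ee_eq_one_iff N t).2 h]
    simp
  · rw [if_neg h, geom_sum_eq (fun hc => h ((ee_eq_one_iff N t).1 hc))]
    have : ee N t ^ N = 1 := by
      rw [ee, ← zpow_natCast _ N, ← zpow_mul, mul_comm, zpow_mul, zpow_natCast,
        (zetaN_prim N).pow_eq_one, one_zpow]
    rw [this]
    simp

lemma val_coe {d : ℕ} [NeZero d] (a : ZMod d) : ((a.val : ℤ) : ZMod d) = a := by
  rw [Int.cast_natCast]
  exact ZMod.natCast_rightInverse a

lemma val_coe' {d : ℕ} [NeZero d] (a : ZMod d) : ((a.val : ℕ) : ZMod d) = a :=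
  ZMod.natCast_rightInverse a

lemma zdvd (d : ℕ) [NeZero d] {X : ℤ} (h : (X : ZMod d) = 0) : (d : ℤ) ∣ X :=
  (ZMod.intCast_zmod_eq_zero_iff_dvd X d).1 h

lemma collapse (d : ℕ) [NeZero d] (f : ZMod d → ℂ) (a : ZMod d) :
    ∑ p : ZMod d, f p * (if (d : ℤ) ∣ ((a.val : ℤ) - p.val) then (d : ℂ) else 0)
      = d * f a := by
  rw [Finset.sum_eq_single a]
  · rw [if_pos (by simp), mul_comm]
  · intro p _ hp
    rw [if_neg, mul_zero]
    intro hdvd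
    apply hp
    have : ((((a.val : ℤ) - p.val) : ℤ) : ZMod d) = 0 :=
      (ZMod.intCast_zmod_eq_zero_iff_dvd _ d).2 hdvd
    push_cast [val_coe'] at this
    linear_combination -this
  · intro h; exact absurd (Finset.mem_univ a) h

lemma inv_dft (d : ℕ) [NeZero d] (y : ZMod d → ℂ) (q : ZMod d) :
    ∑ j : ZMod d, dftV d y j * ee d ((q.val : ℤ) * j.val) = d * y q := by
  simp_rw [dftV_ee, Finset.sum_mul]
  rw [Finset.sum_comm]
  have h1 : ∀ p j : ZMod d, y p * ee d (-((p.val : ℤ) * j.val)) * ee d ((q.val : ℤ) * j.val)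
      = y p * ee d (((q.val : ℤ) - p.val) * j.val) := by
    intro p j
    rw [mul_assoc, ← ee_add]
    congr 2
    ring
  simp_rw [h1, ← Finset.mul_sum, sum_ee]
  exact collapse d y q

lemma conjInvDft (d : ℕ) [NeZero d] (m : ZMod d → ℂ) (q : ZMod d) :
    ∑ j : ZMod d, (starRingEnd ℂ) (dftV d m j) * ee d (-((q.val : ℤ) * j.val))
      = d * (starRingEnd ℂ) (m q) := by
  have := congrArg (starRingEnd ℂ) (inv_dft d m q)
  simpa [map_sum, map_mul, conj_ee, map_natCast] using this

lemma ghat (d : ℕ) [NeZero d] (m : ZMod d → ℂ) (ω j : ZMod d) :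
    (d : ℂ) * dftV d (fun p => m p * (starRingEnd ℂ) (m (p + ω))) j
    = ∑ j' : ZMod d, (starRingEnd ℂ) (dftV d m j') * ee d (-((ω.val : ℤ) * j'.val)) *
        dftV d m (j + j') := by
  rw [dftV_ee, Finset.mul_sum]
  have h1 : ∀ p : ZMod d,
      (d : ℂ) * ((fun p => m p * (starRingEnd ℂ) (m (p + ω))) p * ee d (-((p.val : ℤ) * j.val)))
      = (m p * ee d (-((p.val : ℤ) * j.val))) *
        ∑ j' : ZMod d, (starRingEnd ℂ) (dftV d m j') * ee d (-(((p + ω).val : ℤ) * j'.val)) := by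
    intro p
    rw [conjInvDft d m (p + ω)]
    ring
  simp_rw [h1, Finset.mul_sum]
  rw [Finset.sum_comm]
  refine Finset.sum_congr rfl fun j' _ => ?_
  rw [dftV_ee d m (j + j'), Finset.mul_sum]
  refine Finset.sum_congr rfl fun p _ => ?_
  have he : ee d (-((p.val : ℤ) * j.val)) * ee d (-(((p + ω).val : ℤ) * j'.val))
      = ee d (-((ω.val : ℤ) * j'.val)) * ee d (-((p.val : ℤ) * (j + j').val)) := by
    rw [← ee_add, ← ee_add]
    refine ee_congr d (zdvd d ?_)
    push_cast [val_coe']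
    ring
  linear_combination (m p * (starRingEnd ℂ) (dftV d m j')) * he

lemma ee_scale (d L s : ℕ) (hL : L ≠ 0) (hs : s ≠ 0) (hd : d = L * s) (t : ℤ) :
    ee d ((s : ℤ) * t) = ee L t := by
  rw [ee_def, ee_def]
  congr 1
  have hLc : (L : ℂ) ≠ 0 := Nat.cast_ne_zero.2 hL
  have hsc : (s : ℂ) ≠ 0 := Nat.cast_ne_zero.2 hs
  subst hd
  push_cast
  field_simp

lemma arith (d ρ κ L s : ℕ) [NeZero d] (hκ2 : 2 ≤ κ) (hκρ : κ ≤ ρ) (hLdef : L = ρ + κ - 1)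
    (hd : d = L * s) (β : ℤ) (hβlo : 1 - (κ : ℤ) ≤ β) (hβhi : β ≤ (κ : ℤ) - 1)
    (j : ZMod d) (hdvd : (L : ℤ) ∣ β + (j.val : ℤ)) (hj : j ≠ ((-β : ℤ) : ZMod d))
    (j' : ZMod d) (hj' : j'.val < ρ) : ρ ≤ (j + j').val := by
  obtain ⟨t, ht⟩ := hdvd
  have hd0 : d ≠ 0 := NeZero.ne d
  have hjv : j.val < d := ZMod.val_lt j
  have hLz : (L : ℤ) = (ρ : ℤ) + (κ : ℤ) - 1 := by omega
  have hLpos : (0 : ℤ) < (L : ℤ) := by omega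
  have hdz : (d : ℤ) = (L : ℤ) * (s : ℤ) := by exact_mod_cast hd
  have hjv0 : (0 : ℤ) ≤ (j.val : ℤ) := Int.natCast_nonneg _
  have hjvz : ((j.val : ℤ)) < (d : ℤ) := by exact_mod_cast hjv
  have ht0 : 0 ≤ t := by
    by_contra h
    push_neg at h
    have h2 : (L : ℤ) * t ≤ (L : ℤ) * (-1) :=
      mul_le_mul_of_nonneg_left (by omega) hLpos.le
    have h3 : (L : ℤ) * (-1) = -(L : ℤ) := by ring
    linarith
  have ht1 : 1 ≤ t := by
    rcases ht0.lt_or_eq with h | h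
    · omega
    · exfalso
      apply hj
      rw [← val_coe j]
      congr 1
      have : (L : ℤ) * t = 0 := by rw [← h]; ring
      linarith
  have hts : t ≤ (s : ℤ) - 1 := by
    have htne : t ≠ (s : ℤ) := by
      rintro rfl
      apply hj
      have h1 : (-β : ℤ) = (j.val : ℤ) - (d : ℤ) := by
        rw [hdz]; linarith
      have h2 : (((j.val : ℤ) - (d : ℤ) : ℤ) : ZMod d) = j := by
        push_cast [val_coe']
        simp
      rw [h1, h2]
    by_contra h
    push_neg at h
    have h4 : (s : ℤ) + 1 ≤ t := by omega
    have h5 : (L : ℤ) * ((s : ℤ) + 1) ≤ (L : ℤ) * t :=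
      mul_le_mul_of_nonneg_left h4 hLpos.le
    have h6 : (L : ℤ) * ((s : ℤ) + 1) = (d : ℤ) + L := by rw [hdz]; ring
    linarith
  have h7 : (L : ℤ) * 1 ≤ (L : ℤ) * t := mul_le_mul_of_nonneg_left ht1 hLpos.le
  have h8 : (L : ℤ) * t ≤ (L : ℤ) * ((s : ℤ) - 1) := mul_le_mul_of_nonneg_left hts hLpos.le
  have h9 : (L : ℤ) * ((s : ℤ) - 1) = (d : ℤ) - L := by rw [hdz]; ring
  have hj'z : ((j'.val : ℤ)) < (ρ : ℤ) := by exact_mod_cast hj'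
  have hj'0 : (0 : ℤ) ≤ (j'.val : ℤ) := Int.natCast_nonneg _
  have hρle : (ρ : ℤ) ≤ (j.val : ℤ) + (j'.val : ℤ) := by linarith
  have hltd : (j.val : ℤ) + (j'.val : ℤ) < (d : ℤ) := by linarith
  have hval : (j + j').val = j.val + j'.val := by
    rw [ZMod.val_add]
    apply Nat.mod_eq_of_lt
    omega
  omega

lemma vanish (d ρ κ L s : ℕ) [NeZero d] (hκ2 : 2 ≤ κ) (hκρ : κ ≤ ρ) (hLdef : L = ρ + κ - 1)
    (hd : d = L * s) (m : ZMod d → ℂ) (hsupp : ∀ k : ZMod d, ρ ≤ k.val → dftV d m k = 0)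
    (ω : ZMod d) (β : ℤ) (hβlo : 1 - (κ : ℤ) ≤ β) (hβhi : β ≤ (κ : ℤ) - 1)
    (j : ZMod d) (hdvd : (L : ℤ) ∣ β + (j.val : ℤ)) (hj : j ≠ ((-β : ℤ) : ZMod d)) :
    dftV d (fun p => m p * (starRingEnd ℂ) (m (p + ω))) j = 0 := by
  have hd0 : (d : ℂ) ≠ 0 := Nat.cast_ne_zero.2 (NeZero.ne d)
  have h := ghat d m ω j
  have hz : ∀ j' ∈ (Finset.univ : Finset (ZMod d)),
      (starRingEnd ℂ) (dftV d m j') * ee d (-((ω.val : ℤ) * j'.val)) * dftV d m (j + j') = 0 := by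
    intro j' _
    rcases lt_or_ge j'.val ρ with hlt | hge
    · rw [hsupp (j + j') (arith d ρ κ L s hκ2 hκρ hLdef hd β hβlo hβhi j hdvd hj j' hlt),
        mul_zero]
    · rw [hsupp j' hge, map_zero, zero_mul, zero_mul]
  rw [Finset.sum_eq_zero hz] at h
  exact (mul_eq_zero.mp h).resolve_left hd0

lemma key (d ρ κ L s : ℕ) [NeZero d] [NeZero L] (hκ2 : 2 ≤ κ) (hκρ : κ ≤ ρ)
    (hLdef : L = ρ + κ - 1) (hd : d = L * s) (hs : s ≠ 0)
    (m : ZMod d → ℂ) (hsupp : ∀ k : ZMod d, ρ ≤ k.val → dftV d m k = 0)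
    (ω : ZMod d) (β : ℤ) (hβlo : 1 - (κ : ℤ) ≤ β) (hβhi : β ≤ (κ : ℤ) - 1) (n : ZMod d) :
    (d : ℂ) * ∑ ℓ : ZMod L, ee d (-((s : ℤ) * β * ℓ.val)) *
        (m (n - ((ℓ.val * s : ℕ) : ZMod d)) *
          (starRingEnd ℂ) (m (n - ((ℓ.val * s : ℕ) : ZMod d) + ω)))
    = (L : ℂ) * ∑ p : ZMod d,
        (m p * (starRingEnd ℂ) (m (p + ω))) * ee d (β * ((p.val : ℤ) - (n.val : ℤ))) := by
  set g : ZMod d → ℂ := fun p => m p * (starRingEnd ℂ) (m (p + ω)) with hg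
  set j₀ : ZMod d := ((-β : ℤ) : ZMod d) with hj₀
  have step1 : (d : ℂ) * ∑ ℓ : ZMod L, ee d (-((s : ℤ) * β * ℓ.val)) *
        (g (n - ((ℓ.val * s : ℕ) : ZMod d)))
      = ∑ j : ZMod d, dftV d g j * ee d ((n.val : ℤ) * j.val) *
          (if (L : ℤ) ∣ (β + (j.val : ℤ)) then (L : ℂ) else 0) := by
    rw [Finset.mul_sum]
    have h1 : ∀ ℓ : ZMod L,
        (d : ℂ) * (ee d (-((s : ℤ) * β * ℓ.val)) * g (n - ((ℓ.val * s : ℕ) : ZMod d)))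
        = ∑ j : ZMod d, dftV d g j *
            (ee d ((n.val : ℤ) * j.val) * ee d (-((s : ℤ) * (β + (j.val : ℤ)) * ℓ.val))) := by
      intro ℓ
      rw [show (d : ℂ) * (ee d (-((s : ℤ) * β * ℓ.val)) * g (n - ((ℓ.val * s : ℕ) : ZMod d)))
          = ee d (-((s : ℤ) * β * ℓ.val)) *
            ((d : ℂ) * g (n - ((ℓ.val * s : ℕ) : ZMod d))) from by ring,
        ← inv_dft d g (n - ((ℓ.val * s : ℕ) : ZMod d)), Finset.mul_sum]
      refine Finset.sum_congr rfl fun j _ => ?_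
      have he : ee d (-((s : ℤ) * β * ℓ.val)) *
            ee d ((((n - ((ℓ.val * s : ℕ) : ZMod d)).val : ℤ)) * j.val)
          = ee d ((n.val : ℤ) * j.val) * ee d (-((s : ℤ) * (β + (j.val : ℤ)) * ℓ.val)) := by
        rw [← ee_add, ← ee_add]
        refine ee_congr d (zdvd d ?_)
        push_cast [val_coe']
        ring
      linear_combination dftV d g j * he
    simp_rw [h1]
    rw [Finset.sum_comm]
    refine Finset.sum_congr rfl fun j _ => ?_
    have h2 : ∀ ℓ : ZMod L, ee d (-((s : ℤ) * (β + (j.val : ℤ)) * ℓ.val))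
        = ee L ((-(β + (j.val : ℤ))) * ℓ.val) := by
      intro ℓ
      rw [← ee_scale d L s (NeZero.ne L) hs hd]
      congr 1
      ring
    calc ∑ ℓ : ZMod L, dftV d g j *
          (ee d ((n.val : ℤ) * j.val) * ee d (-((s : ℤ) * (β + (j.val : ℤ)) * ℓ.val)))
        = dftV d g j * ee d ((n.val : ℤ) * j.val) *
            ∑ ℓ : ZMod L, ee L ((-(β + (j.val : ℤ))) * ℓ.val) := by
          rw [Finset.mul_sum]
          exact Finset.sum_congr rfl fun ℓ _ => by rw [h2]; ring
      _ = _ := by rw [sum_ee L]; simp only [dvd_neg]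
  have hj₀dvd : (L : ℤ) ∣ β + (j₀.val : ℤ) := by
    have hdd : (d : ℤ) ∣ β + (j₀.val : ℤ) := by
      refine zdvd d ?_
      push_cast [val_coe']
      rw [hj₀]
      push_cast
      ring
    exact dvd_trans ⟨(s : ℤ), by exact_mod_cast hd⟩ hdd
  have step2 : ∑ j : ZMod d, dftV d g j * ee d ((n.val : ℤ) * j.val) *
        (if (L : ℤ) ∣ (β + (j.val : ℤ)) then (L : ℂ) else 0)
      = dftV d g j₀ * ee d ((n.val : ℤ) * j₀.val) * L := by
    rw [Finset.sum_eq_single j₀]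
    · rw [if_pos hj₀dvd]
    · intro j _ hj
      by_cases hdv : (L : ℤ) ∣ (β + (j.val : ℤ))
      · have hv := vanish d ρ κ L s hκ2 hκρ hLdef hd m hsupp ω β hβlo hβhi j hdv hj
        rw [← hg] at hv
        rw [hv, zero_mul, zero_mul]
      · rw [if_neg hdv, mul_zero]
    · intro h; exact absurd (Finset.mem_univ j₀) h
  have step3 : (L : ℂ) * ∑ p : ZMod d, g p * ee d (β * ((p.val : ℤ) - (n.val : ℤ)))
      = dftV d g j₀ * ee d ((n.val : ℤ) * j₀.val) * L := by
    rw [dftV_ee, Finset.sum_mul, Finset.sum_mul, Finset.mul_sum]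
    refine Finset.sum_congr rfl fun p _ => ?_
    have he : ee d (β * ((p.val : ℤ) - (n.val : ℤ)))
        = ee d (-((p.val : ℤ) * j₀.val)) * ee d ((n.val : ℤ) * j₀.val) := by
      rw [← ee_add]
      refine ee_congr d (zdvd d ?_)
      push_cast [val_coe']
      rw [hj₀]
      push_cast
      ring
    rw [he]
    ring
  rw [step1, step2, ← step3]

lemma collapse' (d : ℕ) [NeZero d] (f : ZMod d → ℂ) (c : ZMod d → ℤ) (a : ZMod d)
    (hc : ∀ p : ZMod d, (((c p : ℤ)) : ZMod d) = 0 ↔ p = a) :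
    ∑ p : ZMod d, f p * (if (d : ℤ) ∣ c p then (d : ℂ) else 0) = d * f a := by
  rw [Finset.sum_eq_single a]
  · rw [if_pos (zdvd d ((hc a).2 rfl)), mul_comm]
  · intro p _ hp
    rw [if_neg, mul_zero]
    intro hdvd
    exact hp ((hc p).1 ((ZMod.intCast_zmod_eq_zero_iff_dvd _ d).2 hdvd))
  · intro h; exact absurd (Finset.mem_univ a) h

lemma dft_had_shift (d : ℕ) [NeZero d] (y : ZMod d → ℂ) (γ : ℤ) (ω : ZMod d) :
    dftV d (hadV (dftV d y) (shiftV ((γ : ℤ) : ZMod d) (conjV (dftV d y)))) ω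
    = d * ∑ n : ZMod d, y n * (starRingEnd ℂ) (y (n + ω)) * ee d (γ * (((n + ω).val : ℕ) : ℤ)) := by
  have hconj : ∀ q : ZMod d, (starRingEnd ℂ) (dftV d y q)
      = ∑ n' : ZMod d, (starRingEnd ℂ) (y n') * ee d ((n'.val : ℤ) * q.val) := by
    intro q
    rw [dftV_ee, map_sum]
    exact Finset.sum_congr rfl fun n' _ => by rw [map_mul, conj_ee, neg_neg]
  rw [dftV_ee]
  simp only [hadV, shiftV, conjV]
  have main : ∀ k : ZMod d,
      dftV d y k * (starRingEnd ℂ) (dftV d y (k + ((γ : ℤ) : ZMod d))) *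
        ee d (-((k.val : ℤ) * ω.val))
      = ∑ n : ZMod d, ∑ n' : ZMod d,
          (y n * (starRingEnd ℂ) (y n') * ee d (γ * (n'.val : ℤ))) *
            ee d (((n'.val : ℤ) - (n.val : ℤ) - (ω.val : ℤ)) * (k.val : ℤ)) := by
    intro k
    rw [hconj, dftV_ee d y k, Finset.sum_mul_sum, Finset.sum_mul]
    refine Finset.sum_congr rfl fun n _ => ?_
    rw [Finset.sum_mul]
    refine Finset.sum_congr rfl fun n' _ => ?_
    have he : ee d (-((n.val : ℤ) * k.val)) *
          ee d ((n'.val : ℤ) * (((k + ((γ : ℤ) : ZMod d)).val : ℕ) : ℤ)) *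
          ee d (-((k.val : ℤ) * ω.val))
        = ee d (γ * (n'.val : ℤ)) *
            ee d (((n'.val : ℤ) - (n.val : ℤ) - (ω.val : ℤ)) * (k.val : ℤ)) := by
      rw [← ee_add, ← ee_add, ← ee_add]
      refine ee_congr d (zdvd d ?_)
      push_cast [val_coe']
      ring
    linear_combination (y n * (starRingEnd ℂ) (y n')) * he
  simp_rw [main]
  rw [Finset.sum_comm, Finset.mul_sum]
  refine Finset.sum_congr rfl fun n _ => ?_
  rw [Finset.sum_comm]
  have h3 : ∀ n' : ZMod d,
      (∑ k : ZMod d, (y n * (starRingEnd ℂ) (y n') * ee d (γ * (n'.val : ℤ))) *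
        ee d (((n'.val : ℤ) - (n.val : ℤ) - (ω.val : ℤ)) * (k.val : ℤ)))
      = (y n * (starRingEnd ℂ) (y n') * ee d (γ * (n'.val : ℤ))) *
          (if (d : ℤ) ∣ ((n'.val : ℤ) - (n.val : ℤ) - (ω.val : ℤ)) then (d : ℂ) else 0) := by
    intro n'
    rw [← Finset.mul_sum, sum_ee]
  rw [Finset.sum_congr rfl fun n' _ => h3 n']
  exact collapse' d (fun n' => y n * (starRingEnd ℂ) (y n') * ee d (γ * (n'.val : ℤ)))
    (fun n' => (n'.val : ℤ) - (n.val : ℤ) - (ω.val : ℤ)) (n + ω)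
    (fun p => by
      push_cast [val_coe']
      constructor
      · intro h; linear_combination h
      · intro h; linear_combination h)

lemma lhs_expand (d L s : ℕ) [NeZero d] [NeZero L] (hs : s ≠ 0) (hd : d = L * s)
    (x m : ZMod d → ℂ) (Y : Matrix (ZMod d) (ZMod L) ℂ)
    (hY : ∀ (ω : ZMod d) (ℓ : ZMod L), Y ω ℓ =
      ((‖∑ n : ZMod d, x n * m (n - ((ℓ.val * s : ℕ) : ZMod d)) *
        Complex.exp (-2 * Real.pi * Complex.I * (n.val : ℂ) * (ω.val : ℂ) / (d : ℂ))‖) ^ 2 : ℂ))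
    (ω : ZMod d) (α : ZMod L) :
    (dftMat L * Y.transpose * (dftMat d).transpose) α ω
    = (d : ℂ) * ∑ ℓ : ZMod L, ∑ n : ZMod d,
        ee d ((s : ℤ) * (-((α.val : ℤ) * (ℓ.val : ℤ)))) *
        (x n * (starRingEnd ℂ) (x (n + ω))) *
        (m (n - ((ℓ.val * s : ℕ) : ZMod d)) *
          (starRingEnd ℂ) (m (n - ((ℓ.val * s : ℕ) : ZMod d) + ω))) := by
  set c : ZMod L → ZMod d := fun ℓ => ((ℓ.val * s : ℕ) : ZMod d) with hc
  set S : ZMod d → ZMod L → ℂ :=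
    fun ω' ℓ => ∑ n : ZMod d, x n * m (n - c ℓ) * ee d (-((n.val : ℤ) * (ω'.val : ℤ))) with hS
  have hYe : ∀ (ω' : ZMod d) (ℓ : ZMod L), Y ω' ℓ = S ω' ℓ * (starRingEnd ℂ) (S ω' ℓ) := by
    intro ω' ℓ
    rw [hY]
    have h1 : (∑ n : ZMod d, x n * m (n - ((ℓ.val * s : ℕ) : ZMod d)) *
        Complex.exp (-2 * Real.pi * Complex.I * (n.val : ℂ) * (ω'.val : ℂ) / (d : ℂ)))
        = S ω' ℓ := by
      refine Finset.sum_congr rfl fun n _ => ?_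
      rw [exp_eq_ee]
    rw [h1]
    rw [show ((‖S ω' ℓ‖ : ℂ)) ^ 2 = (Complex.normSq (S ω' ℓ) : ℂ) by
      rw [← Complex.sq_norm]; push_cast; ring]
    rw [← Complex.mul_conj]
  have hSconj : ∀ (ω' : ZMod d) (ℓ : ZMod L), (starRingEnd ℂ) (S ω' ℓ)
      = ∑ n' : ZMod d, (starRingEnd ℂ) (x n') * (starRingEnd ℂ) (m (n' - c ℓ)) *
          ee d ((n'.val : ℤ) * (ω'.val : ℤ)) := by
    intro ω' ℓ
    rw [hS, map_sum]
    exact Finset.sum_congr rfl fun n' _ => by rw [map_mul, map_mul, conj_ee, neg_neg]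
  have hM1 : ∀ ℓ : ZMod L, dftMat L α ℓ = ee d ((s : ℤ) * (-((α.val : ℤ) * (ℓ.val : ℤ)))) := by
    intro ℓ
    show Complex.exp _ = _
    rw [exp_eq_ee, ee_scale d L s (NeZero.ne L) hs hd]
  have hM2 : ∀ ω' : ZMod d, dftMat d ω ω' = ee d (-((ω.val : ℤ) * (ω'.val : ℤ))) := by
    intro ω'
    show Complex.exp _ = _
    rw [exp_eq_ee]
  rw [Matrix.mul_apply]
  simp only [Matrix.mul_apply, Matrix.transpose_apply]
  have expand : ∀ ω' : ZMod d,
      (∑ ℓ : ZMod L, dftMat L α ℓ * Y ω' ℓ) * dftMat d ω ω'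
      = ∑ ℓ : ZMod L, ∑ n : ZMod d, ∑ n' : ZMod d,
          (ee d ((s : ℤ) * (-((α.val : ℤ) * (ℓ.val : ℤ)))) * x n * m (n - c ℓ) *
            (starRingEnd ℂ) (x n') * (starRingEnd ℂ) (m (n' - c ℓ))) *
          ee d (((n'.val : ℤ) - (n.val : ℤ) - (ω.val : ℤ)) * (ω'.val : ℤ)) := by
    intro ω'
    rw [Finset.sum_mul]
    refine Finset.sum_congr rfl fun ℓ _ => ?_
    rw [hYe, hSconj, hM1, hM2, hS]
    rw [Finset.sum_mul_sum, Finset.mul_sum, Finset.sum_mul]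
    refine Finset.sum_congr rfl fun n _ => ?_
    rw [Finset.mul_sum, Finset.sum_mul]
    refine Finset.sum_congr rfl fun n' _ => ?_
    have he : ee d (-((n.val : ℤ) * (ω'.val : ℤ))) * ee d ((n'.val : ℤ) * (ω'.val : ℤ)) *
          ee d (-((ω.val : ℤ) * (ω'.val : ℤ)))
        = ee d (((n'.val : ℤ) - (n.val : ℤ) - (ω.val : ℤ)) * (ω'.val : ℤ)) := by
      rw [← ee_add, ← ee_add]
      refine ee_congr d (zdvd d ?_)
      push_cast [val_coe']
      ring
    linear_combination (ee d ((s : ℤ) * (-((α.val : ℤ) * (ℓ.val : ℤ)))) * x n * m (n - c ℓ) *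
      (starRingEnd ℂ) (x n') * (starRingEnd ℂ) (m (n' - c ℓ))) * he
  rw [Finset.sum_congr rfl fun ω' _ => expand ω', Finset.sum_comm, Finset.mul_sum]
  refine Finset.sum_congr rfl fun ℓ _ => ?_
  rw [Finset.sum_comm, Finset.mul_sum]
  refine Finset.sum_congr rfl fun n _ => ?_
  rw [Finset.sum_comm]
  have h3 : ∀ n' : ZMod d,
      (∑ ω' : ZMod d,
        (ee d ((s : ℤ) * (-((α.val : ℤ) * (ℓ.val : ℤ)))) * x n * m (n - c ℓ) *
          (starRingEnd ℂ) (x n') * (starRingEnd ℂ) (m (n' - c ℓ))) *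
        ee d (((n'.val : ℤ) - (n.val : ℤ) - (ω.val : ℤ)) * (ω'.val : ℤ)))
      = (ee d ((s : ℤ) * (-((α.val : ℤ) * (ℓ.val : ℤ)))) * x n * m (n - c ℓ) *
          (starRingEnd ℂ) (x n') * (starRingEnd ℂ) (m (n' - c ℓ))) *
        (if (d : ℤ) ∣ ((n'.val : ℤ) - (n.val : ℤ) - (ω.val : ℤ)) then (d : ℂ) else 0) := by
    intro n'
    rw [← Finset.mul_sum, sum_ee]
  rw [Finset.sum_congr rfl fun n' _ => h3 n']
  rw [collapse' d _ (fun n' => (n'.val : ℤ) - (n.val : ℤ) - (ω.val : ℤ)) (n + ω)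
    (fun p => by
      push_cast [val_coe']
      constructor
      · intro h; linear_combination h
      · intro h; linear_combination h)]
  have harg : n + ω - c ℓ = n - c ℓ + ω := by ring
  rw [harg]
  ring

lemma master (d ρ κ L s : ℕ) [NeZero d] [NeZero L] (hκ2 : 2 ≤ κ) (hκρ : κ ≤ ρ)
    (hLdef : L = ρ + κ - 1) (hd : d = L * s) (hs : s ≠ 0)
    (x m : ZMod d → ℂ) (hsupp : ∀ k : ZMod d, ρ ≤ k.val → dftV d m k = 0)
    (Y : Matrix (ZMod d) (ZMod L) ℂ)
    (hY : ∀ (ω : ZMod d) (ℓ : ZMod L), Y ω ℓ =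
      ((‖∑ n : ZMod d, x n * m (n - ((ℓ.val * s : ℕ) : ZMod d)) *
        Complex.exp (-2 * Real.pi * Complex.I * (n.val : ℂ) * (ω.val : ℂ) / (d : ℂ))‖) ^ 2 : ℂ))
    (ω : ZMod d) (α : ZMod L) (β : ℤ)
    (hβmod : (L : ℤ) ∣ ((α.val : ℤ) - β)) (hβlo : 1 - (κ : ℤ) ≤ β) (hβhi : β ≤ (κ : ℤ) - 1) :
    (dftMat L * Y.transpose * (dftMat d).transpose) α ω
    = ((L : ℂ) / (d : ℂ) ^ 2) *
        dftV d (hadV (dftV d x) (shiftV ((-β : ℤ) : ZMod d) (conjV (dftV d x)))) ω *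
        dftV d (hadV (dftV d m) (shiftV ((β : ℤ) : ZMod d) (conjV (dftV d m)))) ω := by
  have hd0 : (d : ℂ) ≠ 0 := Nat.cast_ne_zero.2 (NeZero.ne d)
  rw [lhs_expand d L s hs hd x m Y hY ω α, dft_had_shift d x (-β) ω, dft_had_shift d m β ω]
  rw [show ((L : ℂ) / (d : ℂ) ^ 2) *
        ((d : ℂ) * ∑ n : ZMod d, x n * (starRingEnd ℂ) (x (n + ω)) *
          ee d ((-β) * (((n + ω).val : ℕ) : ℤ))) *
        ((d : ℂ) * ∑ p : ZMod d, m p * (starRingEnd ℂ) (m (p + ω)) *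
          ee d (β * (((p + ω).val : ℕ) : ℤ)))
      = (L : ℂ) * ((∑ n : ZMod d, x n * (starRingEnd ℂ) (x (n + ω)) *
          ee d ((-β) * (((n + ω).val : ℕ) : ℤ))) *
        (∑ p : ZMod d, m p * (starRingEnd ℂ) (m (p + ω)) *
          ee d (β * (((p + ω).val : ℕ) : ℤ)))) from by field_simp]
  rw [Finset.sum_mul_sum]
  simp only [Finset.mul_sum]
  rw [Finset.sum_comm]
  refine Finset.sum_congr rfl fun n _ => ?_
  have hE1 : ∀ ℓ : ZMod L, ee d ((s : ℤ) * (-((α.val : ℤ) * (ℓ.val : ℤ))))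
      = ee d (-((s : ℤ) * β * (ℓ.val : ℤ))) := by
    intro ℓ
    refine ee_congr d ?_
    obtain ⟨u, hu⟩ := hβmod
    refine ⟨-(u * ℓ.val), ?_⟩
    rw [show ((d : ℕ) : ℤ) = (L : ℤ) * (s : ℤ) from by exact_mod_cast hd]
    linear_combination (-(s : ℤ) * (ℓ.val : ℤ)) * hu
  calc ∑ ℓ : ZMod L, (d : ℂ) *
        (ee d ((s : ℤ) * (-((α.val : ℤ) * (ℓ.val : ℤ)))) *
          (x n * (starRingEnd ℂ) (x (n + ω))) *
          (m (n - ((ℓ.val * s : ℕ) : ZMod d)) *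
            (starRingEnd ℂ) (m (n - ((ℓ.val * s : ℕ) : ZMod d) + ω))))
      = (x n * (starRingEnd ℂ) (x (n + ω))) *
          ((d : ℂ) * ∑ ℓ : ZMod L, ee d (-((s : ℤ) * β * (ℓ.val : ℤ))) *
            (m (n - ((ℓ.val * s : ℕ) : ZMod d)) *
              (starRingEnd ℂ) (m (n - ((ℓ.val * s : ℕ) : ZMod d) + ω)))) := by
        simp only [Finset.mul_sum]
        refine Finset.sum_congr rfl fun ℓ _ => ?_
        rw [← hE1]
        ring
    _ = (x n * (starRingEnd ℂ) (x (n + ω))) *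
          ((L : ℂ) * ∑ p : ZMod d, (m p * (starRingEnd ℂ) (m (p + ω))) *
            ee d (β * ((p.val : ℤ) - (n.val : ℤ)))) := by
        rw [key d ρ κ L s hκ2 hκρ hLdef hd hs m hsupp ω β hβlo hβhi n]
    _ = ∑ p : ZMod d, (L : ℂ) *
          (x n * (starRingEnd ℂ) (x (n + ω)) * ee d ((-β) * (((n + ω).val : ℕ) : ℤ)) *
            (m p * (starRingEnd ℂ) (m (p + ω)) * ee d (β * (((p + ω).val : ℕ) : ℤ)))) := by
        rw [Finset.mul_sum, Finset.mul_sum]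
        refine Finset.sum_congr rfl fun p _ => ?_
        have he : ee d (β * ((p.val : ℤ) - (n.val : ℤ)))
            = ee d ((-β) * (((n + ω).val : ℕ) : ℤ)) * ee d (β * (((p + ω).val : ℕ) : ℤ)) := by
          rw [← ee_add]
          refine ee_congr d (zdvd d ?_)
          push_cast [val_coe']
          ring
        rw [he]
        ring

/-- sum collapse for bandlimited masks, noiseless case. -/
theorem sum_collapse_bandlimited (d ρ κ L : ℕ) [NeZero d] [NeZero L]
    (hκ2 : 2 ≤ κ) (hκρ : κ ≤ ρ) (hLdef : L = ρ + κ - 1) (hL : L ∣ d)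
    (x m : ZMod d → ℂ)
    (hsupp : ∀ k : ZMod d, ρ ≤ k.val → dftV d m k = 0)
    (Y : Matrix (ZMod d) (ZMod L) ℂ)
    (hY : ∀ (ω : ZMod d) (ℓ : ZMod L), Y ω ℓ =
      ((‖∑ n : ZMod d, x n * m (n - ((ℓ.val * (d / L) : ℕ) : ZMod d)) *
        Complex.exp (-2 * Real.pi * Complex.I * (n.val : ℂ) * (ω.val : ℂ) / (d : ℂ))‖) ^ 2 : ℂ)) :
    ∀ (ω : ZMod d) (α : ZMod L),
      (α.val ≤ κ - 1 →
        (dftMat L * Y.transpose * (dftMat d).transpose) α ω =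
          ((L : ℂ) / (d : ℂ) ^ 2) *
            dftV d (hadV (dftV d x) (shiftV ((-(α.val : ℤ) : ℤ) : ZMod d) (conjV (dftV d x)))) ω *
            dftV d (hadV (dftV d m) (shiftV (((α.val : ℤ) : ℤ) : ZMod d) (conjV (dftV d m)))) ω) ∧
      (ρ ≤ α.val →
        (dftMat L * Y.transpose * (dftMat d).transpose) α ω =
          ((L : ℂ) / (d : ℂ) ^ 2) *
            dftV d (hadV (dftV d x) (shiftV (((L : ℤ) - (α.val : ℤ) : ℤ) : ZMod d) (conjV (dftV d x)))) ω *
            dftV d (hadV (dftV d m) (shiftV (((α.val : ℤ) - (L : ℤ) : ℤ) : ZMod d) (conjV (dftV d m)))) ω) := by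
  intro ω α
  have hd' : d = L * (d / L) := (Nat.mul_div_cancel' hL).symm
  have hs : d / L ≠ 0 := by
    intro h
    rw [h, Nat.mul_zero] at hd'
    exact NeZero.ne d hd'
  constructor
  · intro hα
    have h := master d ρ κ L (d / L) hκ2 hκρ hLdef hd' hs x m hsupp Y hY ω α
      ((α.val : ℤ)) ⟨0, by ring⟩ (by omega) (by omega)
    exact h
  · intro hα
    have hαlt : α.val < L := ZMod.val_lt α
    have h := master d ρ κ L (d / L) hκ2 hκρ hLdef hd' hs x m hsupp Y hY ω α
      ((α.val : ℤ) - (L : ℤ)) ⟨1, by ring⟩ (by omega) (by omega)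
    rw [show ((L : ℤ) - (α.val : ℤ)) = -((α.val : ℤ) - (L : ℤ)) from by ring]
    exact h
end
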